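/- Let h(s) = s·log(e + |s|) for s ∈ ℝ and H(s) = ∫₀ˢ dt/(|h(t)| + 1). Then |H(s)| → ∞ as |s| → ∞. -/

import Mathlib

open Real Filter intervalIntegral

private lemma fcont' : Continuous (fun t : ℝ => 1 / (|t * Real.log (Real.exp 1 + |t|)| + 1)) := by
  apply Continuous.div continuous_const
  · apply Continuous.add _ continuous_const
    apply Continuous.abs
    exact continuous_id.mul ((continuous_const.add continuous_abs).log (fun x => (by positivity : Real.exp 1 + |x| ≠ 0)))
  · intro x; positivity

private lemma key' (s : ℝ) (hs : 0 ≤ s) :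
    Real.log (Real.log (s + Real.exp 1)) ≤
      ∫ t in (0:ℝ)..s, 1 / (|t * Real.log (Real.exp 1 + |t|)| + 1) := by
  have he1 : (1:ℝ) ≤ Real.exp 1 := by
    have := Real.add_one_le_exp (1:ℝ); linarith
  have hlog1 : ∀ t : ℝ, 0 ≤ t → 1 ≤ Real.log (t + Real.exp 1) := by
    intro t ht
    calc (1:ℝ) = Real.log (Real.exp 1) := (Real.log_exp 1).symm
    _ ≤ Real.log (t + Real.exp 1) :=
      Real.log_le_log (Real.exp_pos 1) (by linarith)
  have hderiv : ∀ t ∈ Set.uIcc (0:ℝ) s,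
      HasDerivAt (fun x => Real.log (Real.log (x + Real.exp 1)))
        (1 / ((t + Real.exp 1) * Real.log (t + Real.exp 1))) t := by
    intro t ht
    rw [Set.uIcc_of_le hs] at ht
    have ht0 : 0 ≤ t := ht.1
    have hpos : 0 < t + Real.exp 1 := by linarith
    have h1 : HasDerivAt (fun x : ℝ => x + Real.exp 1) 1 t := (hasDerivAt_id t).add_const _
    have h2 : HasDerivAt (fun x : ℝ => Real.log (x + Real.exp 1)) (1 / (t + Real.exp 1)) t :=
      h1.log hpos.ne'
    have h3 := h2.log (by have := hlog1 t ht0; linarith : Real.log (t + Real.exp 1) ≠ 0)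
    convert h3 using 1
    rw [div_div]
  have hcont : ContinuousOn (fun t : ℝ => 1 / ((t + Real.exp 1) * Real.log (t + Real.exp 1)))
      (Set.uIcc (0:ℝ) s) := by
    apply ContinuousOn.div continuousOn_const
    · exact ((continuousOn_id.add continuousOn_const).mul
        ((continuousOn_id.add continuousOn_const).log (fun x hx => by
          rw [Set.uIcc_of_le hs] at hx
          have : 0 ≤ x := hx.1
          exact (by positivity : x + Real.exp 1 ≠ 0))))
    · intro x hx
      rw [Set.uIcc_of_le hs] at hx
      have hx0 : 0 ≤ x := hx.1
      have h1 := hlog1 x hx0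
      have : 0 < (x + Real.exp 1) * Real.log (x + Real.exp 1) := by
        apply mul_pos (by positivity); linarith
      exact this.ne'
  have hint : (∫ t in (0:ℝ)..s, 1 / ((t + Real.exp 1) * Real.log (t + Real.exp 1)))
      = Real.log (Real.log (s + Real.exp 1)) - Real.log (Real.log (0 + Real.exp 1)) :=
    intervalIntegral.integral_eq_sub_of_hasDerivAt hderiv hcont.intervalIntegrable
  have hmono : (∫ t in (0:ℝ)..s, 1 / ((t + Real.exp 1) * Real.log (t + Real.exp 1)))
      ≤ ∫ t in (0:ℝ)..s, 1 / (|t * Real.log (Real.exp 1 + |t|)| + 1) := by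
    apply intervalIntegral.integral_mono_on hs hcont.intervalIntegrable
      (fcont'.intervalIntegrable _ _)
    intro t ht
    have ht0 : 0 ≤ t := ht.1
    have hl1 := hlog1 t ht0
    have habs : |t| = t := abs_of_nonneg ht0
    have hcomm : Real.exp 1 + t = t + Real.exp 1 := by ring
    have habs2 : |t * Real.log (Real.exp 1 + |t|)| = t * Real.log (t + Real.exp 1) := by
      rw [habs, hcomm, abs_of_nonneg (by nlinarith)]
    rw [habs2]
    apply one_div_le_one_div_of_le
    · positivity
    · nlinarith
  calc Real.log (Real.log (s + Real.exp 1))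
      = Real.log (Real.log (s + Real.exp 1)) - Real.log (Real.log (0 + Real.exp 1)) := by
        simp [Real.log_exp]
    _ = _ := hint.symm
    _ ≤ _ := hmono

theorem stmt_2 (h H : ℝ → ℝ)
    (hh : ∀ s, h s = s * Real.log (Real.exp 1 + |s|))
    (hH : ∀ s, H s = ∫ t in (0 : ℝ)..s, 1 / (|h t| + 1)) :
    Filter.Tendsto (fun s => |H s|) (Filter.cocompact ℝ) Filter.atTop := by
  have hfun : ∀ s, H s = ∫ t in (0:ℝ)..s, 1 / (|t * Real.log (Real.exp 1 + |t|)| + 1) := by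
    intro s; rw [hH s]
    congr 1; funext t; rw [hh t]
  have hodd : ∀ s, H (-s) = - H s := by
    intro s
    rw [hfun, hfun]
    have heq : (fun t : ℝ => 1 / (|t * Real.log (Real.exp 1 + |t|)| + 1))
        = fun t : ℝ => 1 / (|(-t) * Real.log (Real.exp 1 + |(-t)|)| + 1) := by
      funext t; simp [neg_mul, abs_neg]
    calc (∫ t in (0:ℝ)..(-s), 1 / (|t * Real.log (Real.exp 1 + |t|)| + 1))
        = ∫ t in (0:ℝ)..(-s), 1 / (|(-t) * Real.log (Real.exp 1 + |(-t)|)| + 1) := by rw [← heq]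
      _ = ∫ t in (s:ℝ)..(0:ℝ), 1 / (|t * Real.log (Real.exp 1 + |t|)| + 1) := by
          rw [intervalIntegral.integral_comp_neg
            (fun t : ℝ => 1 / (|t * Real.log (Real.exp 1 + |t|)| + 1))]
          norm_num
      _ = - ∫ t in (0:ℝ)..s, 1 / (|t * Real.log (Real.exp 1 + |t|)| + 1) :=
          intervalIntegral.integral_symm _ _
  have hlim : Filter.Tendsto (fun s : ℝ => Real.log (Real.log (s + Real.exp 1)))
      Filter.atTop Filter.atTop :=
    Real.tendsto_log_atTop.comp (Real.tendsto_log_atTop.comp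
      (tendsto_atTop_add_const_right _ _ tendsto_id))
  rw [cocompact_eq_atBot_atTop, Filter.tendsto_sup]
  constructor
  · apply Filter.tendsto_atTop_mono' _ _ (hlim.comp tendsto_neg_atBot_atTop)
    filter_upwards [Filter.eventually_le_atBot (0:ℝ)] with s hs
    have h1 : H s = - H (-s) := by have := hodd (-s); rwa [neg_neg] at this
    have h2 := key' (-s) (by linarith)
    rw [← hfun] at h2
    calc Real.log (Real.log (-s + Real.exp 1)) ≤ H (-s) := h2
      _ ≤ |H (-s)| := le_abs_self _
      _ = |H s| := by rw [h1, abs_neg]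
  · apply Filter.tendsto_atTop_mono' _ _ hlim
    filter_upwards [Filter.eventually_ge_atTop (0:ℝ)] with s hs
    have h2 := key' s hs
    rw [← hfun] at h2
    exact h2.trans (le_abs_self _)
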